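/- Let A ∈ ℂ^{N×N} be a nonzero Hermitian 3-PMP matrix, and let π = {I₁, ..., I_m} be the coarsest partition of {1,...,N} such that A is constant on each block I_i × I_j. Then the simultaneous kernel ∩_{n≥0} ker A^{∘n} of all Hadamard powers of A equals ker(⊕_{j=1}^m J_{I_j}), where J_{I_j} is the all-ones matrix on block I_j; equivalently it equals {v ∈ ℂ^N : Σ_{i ∈ I_j} v_i = 0 for all j}. -/

import Mathlib

open Matrix
open scoped ComplexOrder Classical

/-- A Hermitian matrix is `k`-PMP if all its principal minors of size at most `k`
are non-negative. -/
def kPMP {N : ℕ} (k : ℕ) (A : Matrix (Fin N) (Fin N) ℂ) : Prop :=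
  ∀ S : Finset (Fin N), S.card ≤ k →
    0 ≤ (A.submatrix (fun i : S => (i : Fin N)) (fun i : S => (i : Fin N))).det

lemma minor_nonneg {N : ℕ} {A : Matrix (Fin N) (Fin N) ℂ} (h3 : kPMP 3 A)
    {m : ℕ} (hm : m ≤ 3) (f : Fin m → Fin N) (hf : Function.Injective f) :
    0 ≤ (A.submatrix f f).det := by
  classical
  set S : Finset (Fin N) := Finset.univ.image f with hS
  have hcard : S.card = m := by
    rw [hS, Finset.card_image_of_injective _ hf, Finset.card_univ, Fintype.card_fin]
  have hmem : ∀ a : Fin m, f a ∈ S := fun a => Finset.mem_image_of_mem f (Finset.mem_univ a)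
  let g : Fin m → {x // x ∈ S} := fun a => ⟨f a, hmem a⟩
  have hginj : Function.Injective g := fun a b h => hf (congrArg Subtype.val h)
  have hgbij : Function.Bijective g :=
    (Fintype.bijective_iff_injective_and_card g).2 ⟨hginj, by simp [hcard]⟩
  let e := Equiv.ofBijective g hgbij
  have key := h3 S (by rw [hcard]; exact hm)
  have heq : (A.submatrix (fun i : S => (i : Fin N)) (fun i : S => (i : Fin N))).submatrix
      (⇑e) (⇑e) = A.submatrix f f := by
    ext a b
    simp [Matrix.submatrix, e, g, Equiv.ofBijective]
  rw [← heq, Matrix.det_submatrix_equiv_self]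
  exact key

theorem stmt18 {N : ℕ} (A : Matrix (Fin N) (Fin N) ℂ) (hA : A.IsHermitian)
    (hA0 : A ≠ 0) (h3 : kPMP 3 A)
    (s : Setoid (Fin N))
    (hconst : ∀ i i' j j' : Fin N, s.r i i' → s.r j j' → A i j = A i' j')
    (hcoarsest : ∀ t : Setoid (Fin N),
      (∀ i i' j j' : Fin N, t.r i i' → t.r j j' → A i j = A i' j') → t ≤ s)
    (v : Fin N → ℂ) :
    (∀ n : ℕ, (Matrix.of fun i j => (A i j) ^ n).mulVec v = 0) ↔
      ∀ i₀ : Fin N, ∑ i ∈ Finset.univ.filter (fun i => s.r i i₀), v i = 0 := by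
  classical
  -- basic hermitian / positivity facts
  have hsym : ∀ i j, A j i = (starRingEnd ℂ) (A i j) := fun i j => (hA.apply j i).symm
  set r : Fin N → ℝ := fun i => (A i i).re with hrdef
  have h1 : ∀ i, 0 ≤ A i i := by
    intro i
    have hf : Function.Injective (fun _ : Fin 1 => i) := fun a b _ => Subsingleton.elim a b
    have := minor_nonneg h3 (by norm_num) (fun _ : Fin 1 => i) hf
    simpa [Matrix.det_fin_one] using this
  have hr0 : ∀ i, 0 ≤ r i := by
    intro i
    have := (Complex.le_def.mp (h1 i)).1
    simpa using this
  have hdr : ∀ i, A i i = ((r i : ℝ) : ℂ) := by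
    intro i
    have him : (A i i).im = 0 := by
      have := (Complex.le_def.mp (h1 i)).2
      simpa using this.symm
    apply Complex.ext <;> simp [hrdef, him]
  have h2 : ∀ i j, i ≠ j → Complex.normSq (A i j) ≤ r i * r j := by
    intro i j hij
    have hf : Function.Injective ![i, j] := by
      intro a b h
      fin_cases a <;> fin_cases b <;> simp at h <;>
        first | rfl | exact absurd h (by tauto) | exact absurd h.symm (by tauto)
    have hd := minor_nonneg h3 (by norm_num) ![i, j] hf
    rw [Matrix.det_fin_two] at hd
    have hd' : 0 ≤ A i i * A j j - A i j * A j i := by simpa using hd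
    rw [hsym i j, Complex.mul_conj, hdr i, hdr j] at hd'
    have hcast : (0 : ℂ) ≤ ((r i * r j - Complex.normSq (A i j) : ℝ) : ℂ) := by
      push_cast
      convert hd' using 1
    have := Complex.zero_le_real.mp hcast
    linarith
  have hzero_row : ∀ i, r i = 0 → ∀ k, A i k = 0 := by
    intro i hi k
    by_cases hik : i = k
    · subst hik; rw [hdr i, hi]; norm_num
    · have hle := h2 i k hik
      rw [hi, zero_mul] at hle
      have : Complex.normSq (A i k) = 0 := le_antisymm hle (Complex.normSq_nonneg _)
      exact Complex.normSq_eq_zero.mp this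
  -- key 3x3 lemma : equal "corner" values force equal rows
  have key3 : ∀ i j k : Fin N, A i j = A i i → A j j = A i i → A i k = A j k := by
    intro i j k hij hjj
    by_cases hij' : i = j
    · subst hij'; rfl
    by_cases hki : k = i
    · rw [hki, hsym i j, hij, hdr i, Complex.conj_ofReal]
    by_cases hkj : k = j
    · rw [hkj, hij, hjj]
    -- distinct i, j, k
    have hf : Function.Injective ![i, j, k] := by
      intro a b h
      fin_cases a <;> fin_cases b <;> simp at h <;>
        first | rfl | exact absurd h (by tauto) | exact absurd h.symm (by tauto)
    have hd := minor_nonneg h3 (by norm_num) ![i, j, k] hf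
    rw [Matrix.det_fin_three] at hd
    have hd' : 0 ≤ A i i * A j j * A k k - A i i * A j k * A k j - A i j * A j i * A k k +
        A i j * A j k * A k i + A i k * A j i * A k j - A i k * A j j * A k i := by
      simpa using hd
    have e2 : A i j = ((r i : ℝ) : ℂ) := hij.trans (hdr i)
    have e3 : A j j = ((r i : ℝ) : ℂ) := hjj.trans (hdr i)
    have e4 : A j i = ((r i : ℝ) : ℂ) := by
      rw [hsym i j, e2, Complex.conj_ofReal]
    rw [hdr i, e2, e3, e4, hsym i k, hsym j k, hdr k] at hd'
    have hE : ((r i : ℝ) : ℂ) * ((r i : ℝ) : ℂ) * ((r k : ℝ) : ℂ) -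
        ((r i : ℝ) : ℂ) * A j k * (starRingEnd ℂ) (A j k) -
        ((r i : ℝ) : ℂ) * ((r i : ℝ) : ℂ) * ((r k : ℝ) : ℂ) +
        ((r i : ℝ) : ℂ) * A j k * (starRingEnd ℂ) (A i k) +
        A i k * ((r i : ℝ) : ℂ) * (starRingEnd ℂ) (A j k) -
        A i k * ((r i : ℝ) : ℂ) * (starRingEnd ℂ) (A i k)
        = ((-(r i * Complex.normSq (A i k - A j k)) : ℝ) : ℂ) := by
      push_cast
      rw [← Complex.mul_conj (A i k - A j k), map_sub]
      ring
    rw [hE] at hd'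
    have hreal : (0 : ℝ) ≤ -(r i * Complex.normSq (A i k - A j k)) :=
      Complex.zero_le_real.mp hd'
    have hns : r i * Complex.normSq (A i k - A j k) = 0 := by
      have := mul_nonneg (hr0 i) (Complex.normSq_nonneg (A i k - A j k))
      linarith
    rcases mul_eq_zero.mp hns with hri | hns0
    · -- r i = 0 : both rows are zero
      have hrj : r j = 0 := by
        have : A j j = 0 := by rw [e3, hri]; norm_num
        rw [hrdef]; simp [this]
      rw [hzero_row i hri k, hzero_row j hrj k]
    · have : A i k - A j k = 0 := Complex.normSq_eq_zero.mp hns0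
      linear_combination this
  -- characterization of the partition
  have class_char : ∀ i j : Fin N, s.r i j ↔ (A i j = A i i ∧ A j j = A i i) := by
    intro i j
    constructor
    · intro h
      exact ⟨hconst i i j i (s.refl i) (s.symm h), hconst j i j i (s.symm h) (s.symm h)⟩
    · rintro ⟨hij, hjj⟩
      have hrows : ∀ k, A i k = A j k := fun k => key3 i j k hij hjj
      let t : Setoid (Fin N) :=
        ⟨fun a b => ∀ k, A a k = A b k,
          ⟨fun a k => rfl, fun h k => (h k).symm, fun h h' k => (h k).trans (h' k)⟩⟩
      have ht : ∀ a a' b b' : Fin N, t.r a a' → t.r b b' → A a b = A a' b' := by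
        intro a a' b b' ha hb
        rw [ha b, hsym b a', hb a', ← hsym b' a']
      exact hcoarsest t ht hrows
  -- invariance of entries under the partition
  have hinv : ∀ i k k' : Fin N, s.r k' k → A i k' = A i k :=
    fun i k k' h => hconst i i k' k (s.refl i) h
  have hdiaginv : ∀ k k' : Fin N, s.r k' k → A k' k' = A k k :=
    fun k k' h => hconst k' k k' k h h
  -- fiberwise summation lemma
  have sum_fiber : ∀ (E : Finset (Fin N)) (f : Fin N → ℂ),
      (∀ k k' : Fin N, s.r k' k → f k' = f k) →
      (∀ k ∈ E, ∀ k' : Fin N, s.r k' k → k' ∈ E) →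
      (∀ k ∈ E, ∑ i ∈ Finset.univ.filter (fun i => s.r i k), v i = 0) →
      ∑ k ∈ E, f k * v k = 0 := by
    intro E
    induction E using Finset.strongInduction with
    | _ E ih =>
      intro f hf hcl hz
      rcases E.eq_empty_or_nonempty with rfl | ⟨k₁, hk₁⟩
      · simp
      · have hC : E.filter (fun k => s.r k k₁) = Finset.univ.filter (fun k => s.r k k₁) := by
          ext k
          simp only [Finset.mem_filter, Finset.mem_univ, true_and]
          exact ⟨fun h => h.2, fun h => ⟨hcl k₁ hk₁ k h, h⟩⟩
        have hsplit := Finset.sum_filter_add_sum_filter_not E (fun k => s.r k k₁)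
          (fun k => f k * v k)
        have hss : E.filter (fun k => ¬ s.r k k₁) ⊂ E :=
          Finset.filter_ssubset.mpr ⟨k₁, hk₁, not_not.mpr (s.refl k₁)⟩
        have hone : ∑ k ∈ E.filter (fun k => s.r k k₁), f k * v k = 0 := by
          have hcg : ∀ k ∈ E.filter (fun k => s.r k k₁), f k * v k = f k₁ * v k := by
            intro k hk
            rw [hf k₁ k (Finset.mem_filter.mp hk).2]
          rw [Finset.sum_congr rfl hcg, ← Finset.mul_sum, hC, hz k₁ hk₁, mul_zero]
        have htwo : ∑ k ∈ E.filter (fun k => ¬ s.r k k₁), f k * v k = 0 := by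
          apply ih _ hss f hf
          · intro k hk k' hk'
            rw [Finset.mem_filter] at hk ⊢
            exact ⟨hcl k hk.1 k' hk', fun hc => hk.2 (s.trans (s.symm hk') hc)⟩
          · intro k hk
            exact hz k (Finset.mem_filter.mp hk).1
        rw [← hsplit, hone, htwo, add_zero]
  constructor
  · -- hard direction
    intro hv
    have hsum : ∀ (n : ℕ) (i : Fin N), ∑ k, (A i k) ^ n * v k = 0 := by
      intro n i
      have := congrFun (hv n) i
      simpa [Matrix.mulVec, dotProduct] using this
    -- Vandermonde step
    have vand : ∀ (i : Fin N) (c : ℂ),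
        ∑ k ∈ Finset.univ.filter (fun k => A i k = c), v k = 0 := by
      intro i c
      set p : Polynomial ℂ :=
          ∏ c' ∈ (Finset.univ.image (A i ·)).erase c, (Polynomial.X - Polynomial.C c') with hp
      have hpeval : ∀ x : ℂ, p.eval x = ∏ c' ∈ (Finset.univ.image (A i ·)).erase c, (x - c') := by
        intro x
        rw [hp, Polynomial.eval_prod]
        simp
      have hstepA : ∑ k, p.eval (A i k) * v k = 0 := by
        have hrw : ∀ k, p.eval (A i k) * v k =
            ∑ n ∈ Finset.range (p.natDegree + 1), p.coeff n * ((A i k) ^ n * v k) := by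
          intro k
          rw [Polynomial.eval_eq_sum_range, Finset.sum_mul]
          exact Finset.sum_congr rfl fun n _ => by ring
        rw [Finset.sum_congr rfl fun k _ => hrw k, Finset.sum_comm]
        refine Finset.sum_eq_zero fun n _ => ?_
        rw [← Finset.mul_sum, hsum n i, mul_zero]
      have hsplit := Finset.sum_filter_add_sum_filter_not Finset.univ (fun k => A i k = c)
        (fun k => p.eval (A i k) * v k)
      set t : ℂ := ∏ c' ∈ (Finset.univ.image (A i ·)).erase c, (c - c') with htdef
      have ht0 : t ≠ 0 := by
        rw [htdef]
        refine Finset.prod_ne_zero_iff.mpr fun c' hc' => ?_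
        have := (Finset.mem_erase.mp hc').1
        exact sub_ne_zero.mpr (Ne.symm this)
      have hone : ∑ k ∈ Finset.univ.filter (fun k => A i k = c), p.eval (A i k) * v k =
          t * ∑ k ∈ Finset.univ.filter (fun k => A i k = c), v k := by
        rw [Finset.mul_sum]
        refine Finset.sum_congr rfl fun k hk => ?_
        rw [(Finset.mem_filter.mp hk).2, hpeval]
      have htwo : ∑ k ∈ Finset.univ.filter (fun k => ¬ A i k = c), p.eval (A i k) * v k = 0 := by
        refine Finset.sum_eq_zero fun k hk => ?_
        have hkmem : A i k ∈ (Finset.univ.image (A i ·)).erase c :=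
          Finset.mem_erase.mpr ⟨(Finset.mem_filter.mp hk).2,
            Finset.mem_image_of_mem _ (Finset.mem_univ k)⟩
        rw [hpeval, Finset.prod_eq_zero hkmem (by ring), zero_mul]
      rw [hone, htwo, add_zero, hstepA] at hsplit
      exact (mul_eq_zero.mp hsplit).resolve_left ht0
    -- comparison of diagonal levels
    have hrlt : ∀ i₀ k₁ : Fin N, r i₀ < r k₁ →
        (Finset.univ.filter (fun k => r k₁ < r k)).card <
          (Finset.univ.filter (fun k => r i₀ < r k)).card := by
      intro i₀ k₁ h
      apply Finset.card_lt_card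
      constructor
      · intro k hk
        rw [Finset.mem_filter] at hk ⊢
        exact ⟨hk.1, h.trans hk.2⟩
      · intro hsub
        have := hsub (Finset.mem_filter.mpr ⟨Finset.mem_univ k₁, h⟩)
        exact lt_irrefl _ (Finset.mem_filter.mp this).2
    -- main induction on the number of strictly larger diagonal values
    have main : ∀ n : ℕ, ∀ i₀ : Fin N,
        (Finset.univ.filter (fun k => r i₀ < r k)).card < n →
        ∑ i ∈ Finset.univ.filter (fun i => s.r i i₀), v i = 0 := by
      intro n
      induction n with
      | zero => intro i₀ h; omega
      | succ n ih =>
        intro i₀ hn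
        by_cases hd : r i₀ = 0
        · -- zero diagonal case
          have hall : ∑ k, v k = 0 := by
            have := hsum 0 i₀
            simpa using this
          have hsplit := Finset.sum_filter_add_sum_filter_not Finset.univ
            (fun k => s.r k i₀) v
          have htwo : ∑ k ∈ Finset.univ.filter (fun k => ¬ s.r k i₀), v k = 0 := by
            have hres := sum_fiber (Finset.univ.filter (fun k => ¬ s.r k i₀)) (fun _ => 1)
              (fun _ _ _ => rfl)
              (by
                intro k hk k' hk'
                rw [Finset.mem_filter] at hk ⊢
                exact ⟨Finset.mem_univ _, fun hc => hk.2 (s.trans (s.symm hk') hc)⟩)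
              (by
                intro k hk
                have hkne : r k ≠ 0 := by
                  intro hk0
                  have h1' : A k i₀ = A k k := by
                    rw [hzero_row k hk0 i₀, hzero_row k hk0 k]
                  have h2' : A i₀ i₀ = A k k := by
                    rw [hzero_row k hk0 k, hdr i₀, hd]
                    norm_num
                  exact (Finset.mem_filter.mp hk).2 ((class_char k i₀).mpr ⟨h1', h2'⟩)
                have hklt : r i₀ < r k := by
                  rw [hd]
                  exact lt_of_le_of_ne (hr0 k) (Ne.symm hkne)
                exact ih k (by have := hrlt i₀ k hklt; omega))
            simpa using hres
          rw [htwo, add_zero, hall] at hsplit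
          exact hsplit
        · -- positive diagonal case
          have hdpos : 0 < r i₀ := lt_of_le_of_ne (hr0 i₀) (Ne.symm hd)
          have hT := vand i₀ (A i₀ i₀)
          have hsplit := Finset.sum_filter_add_sum_filter_not
            (Finset.univ.filter (fun k => A i₀ k = A i₀ i₀)) (fun k => s.r k i₀) v
          have hTC : (Finset.univ.filter (fun k => A i₀ k = A i₀ i₀)).filter
              (fun k => s.r k i₀) = Finset.univ.filter (fun k => s.r k i₀) := by
            ext k
            simp only [Finset.mem_filter, Finset.mem_univ, true_and]
            exact ⟨fun h => h.2, fun h => ⟨hinv i₀ i₀ k h, h⟩⟩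
          have hD : ∑ k ∈ (Finset.univ.filter (fun k => A i₀ k = A i₀ i₀)).filter
              (fun k => ¬ s.r k i₀), v k = 0 := by
            have hres := sum_fiber ((Finset.univ.filter (fun k => A i₀ k = A i₀ i₀)).filter
                (fun k => ¬ s.r k i₀)) (fun _ => 1)
              (fun _ _ _ => rfl)
              (by
                intro k hk k' hk'
                simp only [Finset.mem_filter, Finset.mem_univ, true_and] at hk ⊢
                exact ⟨(hinv i₀ k k' hk').trans hk.1, fun hc => hk.2 (s.trans (s.symm hk') hc)⟩)
              (by
                intro k₁ hk₁
                rw [Finset.mem_filter, Finset.mem_filter] at hk₁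
                obtain ⟨⟨_, hval⟩, hnr⟩ := hk₁
                have hne : i₀ ≠ k₁ := by
                  intro h
                  exact hnr (h ▸ s.refl i₀)
                have hnorm := h2 i₀ k₁ hne
                have hvd : A i₀ k₁ = ((r i₀ : ℝ) : ℂ) := hval.trans (hdr i₀)
                rw [hvd, Complex.normSq_ofReal] at hnorm
                have hle : r i₀ ≤ r k₁ := by
                  by_contra hcon
                  push_neg at hcon
                  nlinarith
                have hlt : r i₀ < r k₁ := by
                  rcases lt_or_eq_of_le hle with h | h
                  · exact h
                  · exfalso
                    apply hnr
                    apply s.symm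
                    apply (class_char i₀ k₁).mpr
                    refine ⟨hval, ?_⟩
                    rw [hdr k₁, ← h, ← hdr i₀]
                exact ih k₁ (by have := hrlt i₀ k₁ hlt; omega))
            simpa using hres
          rw [hTC, hD, add_zero] at hsplit
          rw [hsplit]
          exact hT
    exact fun i₀ => main _ i₀ (Nat.lt_succ_self _)
  · -- easy direction
    intro hz n
    funext i
    have hres := sum_fiber Finset.univ (fun k => (A i k) ^ n)
      (fun k k' h => by show A i k' ^ n = A i k ^ n; rw [hinv i k k' h])
      (fun _ _ _ _ => Finset.mem_univ _)
      (fun k _ => hz k)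
    show ∑ k, (A i k) ^ n * v k = 0
    exact hres
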